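/- Let q be a real number with 0<q<1, let r and f be positive integers, let χ be a Dirichlet character modulo f with values in ℂ, let x>0 be real and w₁,…,w_r positive reals. Then for every s∈ℂ the family (n₁,…,n_r) ↦ (∏_{k=1}^r χ(n_k))·q^{Σ_{m=1}^r w_m n_m}·[x+Σ_{m=1}^r w_m n_m]_q^{-s}, indexed by r-tuples of positive integers, is summable; hence the two-variable multiple Dirichlet q-L-series L_{q,r}(s,x|χ;w₁,…,w_r) converges absolutely for all s∈ℂ. -/

import Mathlib

open Complex

/-- The `q`-number `[y]_q = (1 - q^y)/(1 - q)`, where `q^y` is the real power. -/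
noncomputable def qNum (q y : ℝ) : ℝ := (1 - q ^ y) / (1 - q)

set_option maxHeartbeats 1000000 in
lemma summable_pi_prod : ∀ (n : ℕ) (g : Fin n → ℕ → ℝ), (∀ i, Summable (g i)) →
    (∀ i k, 0 ≤ g i k) → Summable fun ν : Fin n → ℕ => ∏ i, g i (ν i) := by
  intro n
  induction n with
  | zero =>
    intro g _ _
    exact Summable.of_finite
  | succ n ih =>
    intro g hg h0
    have hB : Summable fun νn : Fin n → ℕ => ∏ i, g i.succ (νn i) :=
      ih (fun i => g i.succ) (fun i => hg i.succ) (fun i k => h0 i.succ k)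
    have h0' : (0 : ℕ → ℝ) ≤ g 0 := fun k => h0 0 k
    have hB0 : (0 : (Fin n → ℕ) → ℝ) ≤ fun νn => ∏ i, g i.succ (νn i) :=
      fun νn => Finset.prod_nonneg fun i _ => h0 i.succ (νn i)
    have h1 : Summable fun p : ℕ × (Fin n → ℕ) => g 0 p.1 * ∏ i, g i.succ (p.2 i) :=
      ((hg 0).mul_of_nonneg hB h0' hB0).congr (fun p => rfl)
    refine (Equiv.summable_iff (Fin.consEquiv (fun _ => ℕ))).mp (h1.congr fun p => ?_)
    simp only [Function.comp_apply, Fin.consEquiv_apply, Fin.prod_univ_succ, Fin.cons_zero,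
      Fin.cons_succ]

/-- For `0 < q < 1` the family defining the two-variable multiple Dirichlet `q`-`L`-series
`L_{q,r}(s, x | χ; w₁,…,w_r)`, indexed by `r`-tuples of positive integers, is summable for
every `s ∈ ℂ`. -/
theorem stmt13 (q : ℝ) (hq0 : 0 < q) (hq1 : q < 1) (r f : ℕ) (hr : 0 < r) (hf : 0 < f)
    (χ : DirichletCharacter ℂ f) (x : ℝ) (hx : 0 < x) (w : Fin r → ℝ) (hw : ∀ j, 0 < w j) :
    ∀ s : ℂ, Summable (fun ν : Fin r → ℕ => (∏ k, χ ((ν k + 1 : ℕ) : ZMod f)) *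
      ((q ^ (∑ m, w m * ((ν m : ℝ) + 1)) : ℝ) : ℂ) *
      ((qNum q (x + ∑ m, w m * ((ν m : ℝ) + 1)) : ℝ) : ℂ) ^ (-s)) := by
  intro s
  have hq1' : 1 - q > 0 := by linarith
  set c : ℝ := (1 - q ^ x) / (1 - q) with hc
  have hqx : q ^ x < 1 := Real.rpow_lt_one hq0.le hq1 hx
  have hcpos : 0 < c := div_pos (by linarith) hq1'
  set C : ℝ := 1 / (1 - q) with hC
  set M : ℝ := max (c ^ (-s).re) (C ^ (-s).re) with hM
  -- the comparison family
  have hsum : Summable fun ν : Fin r → ℕ => M * ∏ m, q ^ (w m * ((ν m : ℝ) + 1)) := by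
    refine Summable.mul_left M ?_
    refine summable_pi_prod r (fun m k => q ^ (w m * ((k : ℝ) + 1))) (fun m => ?_)
      (fun m k => (Real.rpow_pos_of_pos hq0 _).le)
    have : Summable fun k : ℕ => (q ^ (w m)) ^ (k + 1) := by
      refine (summable_geometric_of_lt_one (by positivity) ?_).comp_injective
        (add_left_injective 1)
      exact Real.rpow_lt_one hq0.le hq1 (hw m)
    refine this.congr fun k => ?_
    rw [← Real.rpow_natCast (q ^ w m) (k + 1), ← Real.rpow_mul hq0.le]
    push_cast
    ring_nf
  apply Summable.of_norm
  refine Summable.of_nonneg_of_le (fun ν => norm_nonneg _) (fun ν => ?_) hsum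
  set S : ℝ := ∑ m, w m * ((ν m : ℝ) + 1) with hS
  have hSpos : 0 < S := by
    rw [hS]
    refine Finset.sum_pos (fun m _ => mul_pos (hw m) (by positivity)) ?_
    exact Finset.univ_nonempty_iff.mpr (Fin.pos_iff_nonempty.mp hr)
  set t : ℝ := qNum q (x + S) with ht
  have hqxS : q ^ (x + S) < 1 := Real.rpow_lt_one hq0.le hq1 (by linarith)
  have htpos : 0 < t := div_pos (by linarith) hq1'
  -- bounds on t
  have htc : c ≤ t := by
    rw [ht, qNum, hc]
    have : q ^ (x + S) ≤ q ^ x :=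
      Real.rpow_le_rpow_of_exponent_ge hq0 hq1.le (by linarith)
    gcongr
  have htC : t ≤ C := by
    rw [ht, hC, qNum]
    have : 0 < q ^ (x + S) := Real.rpow_pos_of_pos hq0 _
    gcongr
    linarith
  -- bound on the cpow factor
  have hbound : ‖((t : ℝ) : ℂ) ^ (-s)‖ ≤ M := by
    rw [Complex.norm_cpow_eq_rpow_re_of_pos htpos]
    rcases le_or_gt 0 (-s).re with h | h
    · exact le_max_of_le_right (Real.rpow_le_rpow htpos.le htC h)
    · exact le_max_of_le_left (Real.rpow_le_rpow_of_nonpos hcpos htc h.le)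
  calc ‖(∏ k, χ ((ν k + 1 : ℕ) : ZMod f)) * ((q ^ S : ℝ) : ℂ) * ((t : ℝ) : ℂ) ^ (-s)‖
      = ‖∏ k, χ ((ν k + 1 : ℕ) : ZMod f)‖ * ‖((q ^ S : ℝ) : ℂ)‖ * ‖((t : ℝ) : ℂ) ^ (-s)‖ := by
        simp [norm_mul]
    _ ≤ 1 * (q ^ S) * M := by
        refine mul_le_mul (mul_le_mul ?_ ?_ (norm_nonneg _) zero_le_one) hbound
          (norm_nonneg _) (by positivity)
        · rw [norm_prod]
          exact Finset.prod_le_one (fun k _ => norm_nonneg _) (fun k _ => χ.norm_le_one _)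
        · rw [Complex.norm_real, Real.norm_eq_abs,
            abs_of_pos (Real.rpow_pos_of_pos hq0 _)]
    _ = M * ∏ m, q ^ (w m * ((ν m : ℝ) + 1)) := by
        rw [one_mul, mul_comm, hS, Real.rpow_sum_of_pos hq0]
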